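/- Let N = (S,T,F,M0,ℓ) be a Petri net and N′ = (S′,T′,F′,M0′,ℓ′) a plain Petri net with S′ ⊆ S and M0′ = M0 ↾ S′. Suppose: (1) for every t ∈ T with ℓ(t) ≠ τ there are t′ ∈ T′ with ℓ′(t′) = ℓ(t) and a finite multiset G ∈ ℕ^T with ℓ(G) ≡ ∅ and ⟦t′⟧ = ⟦t + G⟧; (2) for every finite signed multiset G ∈ ℤ^T with ℓ(G) ≡ ∅, every M′ ∈ ℕ^{S′}, U′ ∈ ℕ^{T′} and U ∈ ℕ^T with ℓ′(U′) = ℓ(U), M′ + •U′ ∈ [M0′⟩_{N′}, and M := M′ + •U′ + (M0 − M0′) + ⟦G⟧ − •U ∈ ℕ^S with M + •U ∈ [M0⟩_N, it holds that: (a) there is no infinite sequence M —τ→ M1 —τ→ M2 —τ→ ⋯; (b) if M′ —a→ with a ∈ Act then M —a→ or M —τ→; (c) if M —a→ with a ∈ Act then M′ —a→. Then N and N′ are branching ST-bisimilar with explicit divergence (N ≈Δ_bSTb N′). -/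

import Mathlib

open scoped Classical

/-- A labelled Petri net over the set `A` of visible actions (a transition labelled
`none` is a τ-(internal) transition), with places drawn from the universe `P` and
transitions drawn from the universe `Tr`.  `pre t p` is the arc weight `F(p,t)` and
`post t p` is the arc weight `F(t,p)`. -/
structure PNet (P Tr A : Type) where
  places : Set P
  trans : Set Tr
  pre : Tr → P → ℕ
  post : Tr → P → ℕ
  M0 : P → ℕ
  l : Tr → Option A
  pre_wf : ∀ t p, pre t p ≠ 0 → t ∈ trans ∧ p ∈ places
  post_wf : ∀ t p, post t p ≠ 0 → t ∈ trans ∧ p ∈ places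
  M0_wf : ∀ p, M0 p ≠ 0 → p ∈ places

namespace PNet

variable {P Tr A : Type}

/-- `•G`, for a finite multiset `G` of transitions. -/
def preStep (N : PNet P Tr A) (G : Tr →₀ ℕ) : P → ℕ :=
  fun p => G.sum fun t n => n * N.pre t p

/-- `G•`, for a finite multiset `G` of transitions. -/
def postStep (N : PNet P Tr A) (G : Tr →₀ ℕ) : P → ℕ :=
  fun p => G.sum fun t n => n * N.post t p

/-- `M [G⟩ M'` : the (nonempty, finite) multiset `G` of transitions is a step from
`M` to `M'`. -/
def IsStep (N : PNet P Tr A) (M : P → ℕ) (G : Tr →₀ ℕ) (M' : P → ℕ) : Prop :=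
  G ≠ 0 ∧ ↑G.support ⊆ N.trans ∧ (∀ p, N.preStep G p ≤ M p) ∧
    ∀ p, M' p = M p - N.preStep G p + N.postStep G p

/-- `[M0⟩` : the set of reachable markings. -/
inductive Reachable (N : PNet P Tr A) : (P → ℕ) → Prop
  | refl : Reachable N N.M0
  | step {M G M'} : Reachable N M → N.IsStep M G M' → Reachable N M'

/-- The transition `t` is enabled under the marking `M`. -/
def enabled (N : PNet P Tr A) (M : P → ℕ) (t : Tr) : Prop :=
  t ∈ N.trans ∧ ∀ p, N.pre t p ≤ M p

/-- The concurrency relation `t ⌣ u`. -/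
def Conc (N : PNet P Tr A) (t u : Tr) : Prop :=
  t ∈ N.trans ∧ u ∈ N.trans ∧ ∃ M, N.Reachable M ∧ ∀ p, N.pre t p + N.pre u p ≤ M p

/-- Firing of a single transition: `M [\{t\}⟩ M'`. -/
def fire (N : PNet P Tr A) (M : P → ℕ) (t : Tr) (M' : P → ℕ) : Prop :=
  N.enabled M t ∧ ∀ p, M' p = M p - N.pre t p + N.post t p

/-- `M —τ→ M'`. -/
def tauFire (N : PNet P Tr A) (M M' : P → ℕ) : Prop :=
  ∃ t, N.l t = none ∧ N.fire M t M'

/-- `M —a→ M'` for a visible action `a`. -/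
def visFire (N : PNet P Tr A) (a : A) (M M' : P → ℕ) : Prop :=
  ∃ t, N.l t = some a ∧ N.fire M t M'

/-- `M ⟹ M'` : the reflexive-transitive closure of `—τ→`. -/
def Taus (N : PNet P Tr A) : (P → ℕ) → (P → ℕ) → Prop :=
  Relation.ReflTransGen N.tauFire

/-- `M ⟹σ⟹ M'` for a sequence `σ` of visible actions. -/
def seqReach (N : PNet P Tr A) : List A → (P → ℕ) → (P → ℕ) → Prop
  | [], M, M' => N.Taus M M'
  | a :: σ, M, M'' => ∃ M1 M2, N.Taus M M1 ∧ N.visFire a M1 M2 ∧ N.seqReach σ M2 M''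

/-- `ℓ(G)(a)` : the number of occurrences of the visible action `a` in the finite
multiset `G` of transitions. -/
noncomputable def labCount (N : PNet P Tr A) (G : Tr →₀ ℕ) (a : A) : ℕ :=
  ∑ t ∈ G.support, if N.l t = some a then G t else 0

/-- `ℓ(G)(a)` for a finite signed multiset `G` of transitions. -/
noncomputable def labCountZ (N : PNet P Tr A) (G : Tr →₀ ℤ) (a : A) : ℤ :=
  ∑ t ∈ G.support, if N.l t = some a then G t else 0

/-- `ℓ(G) ≡ ∅` : the signed multiset `G` contains no visible actions. -/
def SilentZ (N : PNet P Tr A) (G : Tr →₀ ℤ) : Prop := ∀ a, N.labCountZ G a = 0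

/-- The token replacement `⟦G⟧ = G• − •G` of a finite signed multiset of transitions. -/
noncomputable def tok (N : PNet P Tr A) (G : Tr →₀ ℤ) : P → ℤ :=
  fun p => ∑ t ∈ G.support, G t * ((N.post t p : ℤ) - (N.pre t p : ℤ))

/-- The token replacement `⟦G⟧ = G• − •G` of a finite multiset of transitions. -/
noncomputable def tokN (N : PNet P Tr A) (G : Tr →₀ ℕ) : P → ℤ :=
  fun p => ∑ t ∈ G.support, (G t : ℤ) * ((N.post t p : ℤ) - (N.pre t p : ℤ))

/-- `M —X→` : a step with multiset of visible labels `X ∈ ℕ^Act` is enabled in `M`. -/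
def stepTo (N : PNet P Tr A) (M : P → ℕ) (X : A → ℕ) : Prop :=
  ∃ G : Tr →₀ ℕ, G ≠ 0 ∧ ↑G.support ⊆ N.trans ∧ (∀ t ∈ G.support, N.l t ≠ none) ∧
    (∀ p, N.preStep G p ≤ M p) ∧ ∀ a, N.labCount G a = X a

/-- `⟨σ, X⟩` is a step ready pair of `N`. -/
def StepReadyPair (N : PNet P Tr A) (σ : List A) (X : Set (A → ℕ)) : Prop :=
  ∃ M, N.seqReach σ N.M0 M ∧ (∀ M', ¬ N.tauFire M M') ∧ X = {Y | N.stepTo M Y}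

/-- A net is plain iff its labelling is injective and no transition is labelled τ. -/
def Plain (N : PNet P Tr A) : Prop :=
  (∀ t ∈ N.trans, N.l t ≠ none) ∧
    ∀ t ∈ N.trans, ∀ u ∈ N.trans, N.l t = N.l u → t = u

/-- A structural conflict net: concurrent transitions have no common preplace. -/
def StructuralConflict (N : PNet P Tr A) : Prop :=
  ∀ t u, N.Conc t u → ∀ p, N.pre t p = 0 ∨ N.pre u p = 0

/-- A finitary net: every transition has a preplace, and every reachable marking is
finite and enables only finitely many transitions. -/
def Finitary (N : PNet P Tr A) : Prop :=
  (∀ t ∈ N.trans, ∃ p, N.pre t p ≠ 0) ∧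
    ∀ M, N.Reachable M → {p | M p ≠ 0}.Finite ∧ {t | N.enabled M t}.Finite

/-- `N` has a fully reachable pure M. -/
def FullyReachablePureM (N : PNet P Tr A) : Prop :=
  ∃ t u v : Tr, t ∈ N.trans ∧ u ∈ N.trans ∧ v ∈ N.trans ∧
    (∃ p, N.pre t p ≠ 0 ∧ N.pre u p ≠ 0) ∧
    (∃ p, N.pre u p ≠ 0 ∧ N.pre v p ≠ 0) ∧
    (∀ p, N.pre t p = 0 ∨ N.pre v p = 0) ∧
    ∃ M, N.Reachable M ∧ ∀ p, max (max (N.pre t p) (N.pre u p)) (N.pre v p) ≤ M p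

/-- `N` is distributed w.r.t. the distribution `D`. -/
def DistributedWrt (N : PNet P Tr A) {Loc : Type} (D : P ⊕ Tr → Loc) : Prop :=
  (∀ t p, N.pre t p ≠ 0 → D (Sum.inr t) = D (Sum.inl p)) ∧
    ∀ t u, N.Conc t u → D (Sum.inr t) ≠ D (Sum.inr u)

/-- `N` is a distributed net. -/
def Distributed (N : PNet P Tr A) : Prop :=
  ∃ (Loc : Type) (D : P ⊕ Tr → Loc), N.DistributedWrt D

/-- `N` is essentially distributed w.r.t. the distribution `D`. -/
def EssentiallyDistributedWrt (N : PNet P Tr A) {Loc : Type} (D : P ⊕ Tr → Loc) : Prop :=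
  (∀ t p, N.pre t p ≠ 0 → D (Sum.inr t) = D (Sum.inl p)) ∧
    ∀ t u, N.Conc t u → N.l t ≠ none → D (Sum.inr t) ≠ D (Sum.inr u)

def EssentiallyDistributed (N : PNet P Tr A) : Prop :=
  ∃ (Loc : Type) (D : P ⊕ Tr → Loc), N.EssentiallyDistributedWrt D

/-- `N` is externally distributed w.r.t. the distribution `D`. -/
def ExternallyDistributedWrt (N : PNet P Tr A) {Loc : Type} (D : P ⊕ Tr → Loc) : Prop :=
  (∀ t p, N.pre t p ≠ 0 → D (Sum.inr t) = D (Sum.inl p)) ∧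
    ∀ t u, N.Conc t u → N.l t ≠ none → N.l u ≠ none → D (Sum.inr t) ≠ D (Sum.inr u)

def ExternallyDistributed (N : PNet P Tr A) : Prop :=
  ∃ (Loc : Type) (D : P ⊕ Tr → Loc), N.ExternallyDistributedWrt D

/-- The generating relation of the canonical co-location relation: a transition is
co-located with each of its preplaces. -/
def canonGen (N : PNet P Tr A) : (P ⊕ Tr) → (P ⊕ Tr) → Prop :=
  fun x y => ∃ t p, x = Sum.inr t ∧ y = Sum.inl p ∧ N.pre t p ≠ 0

/-- The canonical co-location relation `≡_C`. -/
def canonRel (N : PNet P Tr A) : (P ⊕ Tr) → (P ⊕ Tr) → Prop :=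
  Relation.EqvGen N.canonGen

/-- The canonical distribution, mapping every net element to its `≡_C`-class. -/
def canonDist (N : PNet P Tr A) : (P ⊕ Tr) → Quot N.canonRel := Quot.mk _

/-- The flow relation `F` on `S ∪ T`. -/
def flow (N : PNet P Tr A) : P ⊕ Tr → P ⊕ Tr → ℕ
  | Sum.inl p, Sum.inr t => N.pre t p
  | Sum.inr t, Sum.inl p => N.post t p
  | _, _ => 0

/-- `F ↾ (S ∪ T⁺)` is acyclic. -/
def AcyclicOn (N : PNet P Tr A) (Tp : Set Tr) : Prop :=
  ∀ x : P ⊕ Tr, ¬ Relation.TransGen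
    (fun x y => N.flow x y ≠ 0 ∧ (∀ t, x = Sum.inr t → t ∈ Tp) ∧
      (∀ t, y = Sum.inr t → t ∈ Tp)) x x

/-- A path in `N`, as a nonempty alternating list of net elements. -/
def IsPathList (N : PNet P Tr A) (π : List (P ⊕ Tr)) : Prop :=
  π ≠ [] ∧ π.Chain' fun x y => N.flow x y ≠ 0

/-- The arc weight `F(π)` of a path `π`. -/
def pathWeight (N : PNet P Tr A) (π : List (P ⊕ Tr)) : ℕ :=
  ((π.zip π.tail).map fun q => N.flow q.1 q.2).prod

/-- A faithful place w.r.t. `T⁺` and `S⁺`, i.e. `|{s} ∩ S⁺| + ∑_{t ∈ T⁺} F(t,s) = 1`. -/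
def FaithfulPlace (N : PNet P Tr A) (Tp : Set Tr) (Sp : Set P) (s : P) : Prop :=
  (s ∈ Sp ∧ ∀ t ∈ Tp, N.post t s = 0) ∨
    (s ∉ Sp ∧ ∃ t ∈ Tp, N.post t s = 1 ∧ ∀ u ∈ Tp, u ≠ t → N.post u s = 0)

/-- A faithful path w.r.t. `T⁺` and `S⁺`: all nodes but the last are transitions
in `T⁺` or faithful places. -/
def FaithfulPath (N : PNet P Tr A) (Tp : Set Tr) (Sp : Set P) (π : List (P ⊕ Tr)) : Prop :=
  N.IsPathList π ∧ ∀ x ∈ π.dropLast,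
    (∃ t ∈ Tp, x = Sum.inr t) ∨ ∃ s, x = Sum.inl s ∧ N.FaithfulPlace Tp Sp s

/-- The multiset `*x` of faithful origins of a net element `x`, w.r.t. `T⁺` and `S⁺`. -/
noncomputable def faithOrig (N : PNet P Tr A) (Tp : Set Tr) (Sp : Set P) (x : P ⊕ Tr) :
    P → ℕ∞ :=
  fun s => sSup {w : ℕ∞ | ∃ π : List (P ⊕ Tr), s ∈ Sp ∧ N.FaithfulPath Tp Sp π ∧
    π.head? = some (Sum.inl s) ∧ π.getLast? = some x ∧ w = (N.pathWeight π : ℕ∞)}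

end PNet

/-- A labelled transition system over visible labels `L` (the invisible action τ is
represented by `none`). -/
structure LTS (St L : Type) where
  init : St
  tr : St → Option L → St → Prop

namespace LTS

variable {St L : Type}

/-- `⟹` : the reflexive-transitive closure of `—τ→`. -/
def Taus (Lt : LTS St L) : St → St → Prop :=
  Relation.ReflTransGen fun s s' => Lt.tr s none s'

/-- `s —(η)→ s'` : an `η`-transition that may stay put when `η = τ`. -/
def OptTr (Lt : LTS St L) (s : St) (η : Option L) (s' : St) : Prop :=
  Lt.tr s η s' ∨ (η = none ∧ s = s')

/-- The state `s` admits an infinite sequence of τ-transitions. -/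
def Diverges (Lt : LTS St L) (s : St) : Prop :=
  ∃ f : ℕ → St, f 0 = s ∧ ∀ n, Lt.tr (f n) none (f (n + 1))

def ReachableState (Lt : LTS St L) (s : St) : Prop :=
  Relation.ReflTransGen (fun x y => ∃ η, Lt.tr x η y) Lt.init s

/-- A deterministic LTS: no reachable state admits a τ-transition, and visible
transitions from reachable states are deterministic. -/
def Deterministic (Lt : LTS St L) : Prop :=
  ∀ s, Lt.ReachableState s →
    (∀ s', ¬ Lt.tr s none s') ∧
      ∀ a s' s'', Lt.tr s (some a) s' → Lt.tr s (some a) s'' → s' = s''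

end LTS

/-- `B` is a branching bisimulation between the two LTSs. -/
def IsBranchingBisim {St1 St2 L : Type} (L1 : LTS St1 L) (L2 : LTS St2 L)
    (B : St1 → St2 → Prop) : Prop :=
  B L1.init L2.init ∧
    (∀ s1 s2 η s1', B s1 s2 → L1.tr s1 η s1' →
      ∃ s2d s2', L2.Taus s2 s2d ∧ L2.OptTr s2d η s2' ∧ B s1 s2d ∧ B s1' s2') ∧
    ∀ s1 s2 η s2', B s1 s2 → L2.tr s2 η s2' →
      ∃ s1d s1', L1.Taus s1 s1d ∧ L1.OptTr s1d η s1' ∧ B s1d s2 ∧ B s1' s2'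

/-- The two LTSs are branching bisimilar. -/
def BranchingBisimilar {St1 St2 L : Type} (L1 : LTS St1 L) (L2 : LTS St2 L) : Prop :=
  ∃ B, IsBranchingBisim L1 L2 B

/-- The two LTSs are branching bisimilar with explicit divergence. -/
def BranchingBisimilarED {St1 St2 L : Type} (L1 : LTS St1 L) (L2 : LTS St2 L) : Prop :=
  ∃ B, IsBranchingBisim L1 L2 B ∧
    ∀ s1 s2, B s1 s2 → (L1.Diverges s1 ↔ L2.Diverges s2)

/-- The visible action phases `a⁺` and `a⁻ⁿ` (here `n` is the 0-based position of the
terminating transition in the sequence of transitions currently firing). -/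
inductive STLabel (A : Type) : Type
  | plus (a : A)
  | minus (a : A) (n : ℕ)

/-- The visible action phases `a⁺` and `a⁻` of split semantics. -/
inductive SplitLabel (A : Type) : Type
  | plus (a : A)
  | minus (a : A)

/-- The map `η ↦ η‾` from ST-action phases to split action phases. -/
def STLabel.bar {A : Type} : STLabel A → SplitLabel A
  | .plus a => .plus a
  | .minus a _ => .minus a

namespace PNet

variable {P Tr A : Type}

/-- The ST-transition relations between ST-markings. -/
def stTr (N : PNet P Tr A) :
    ((P → ℕ) × List Tr) → Option (STLabel A) → ((P → ℕ) × List Tr) → Prop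
  | s, some (STLabel.plus a), s' => ∃ t, N.l t = some a ∧ N.enabled s.1 t ∧
      (∀ p, s'.1 p = s.1 p - N.pre t p) ∧ s'.2 = s.2 ++ [t]
  | s, some (STLabel.minus a n), s' => ∃ t, s.2[n]? = some t ∧ N.l t = some a ∧
      s'.2 = s.2.eraseIdx n ∧ ∀ p, s'.1 p = s.1 p + N.post t p
  | s, none, s' => ∃ t, N.l t = none ∧ N.fire s.1 t s'.1 ∧ s'.2 = s.2

/-- The ST-LTS associated to a net. -/
def stLTS (N : PNet P Tr A) : LTS ((P → ℕ) × List Tr) (STLabel A) :=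
  ⟨(N.M0, []), N.stTr⟩

/-- The split transition relations between split markings. -/
def splitTr (N : PNet P Tr A) :
    ((P → ℕ) × Multiset Tr) → Option (SplitLabel A) → ((P → ℕ) × Multiset Tr) → Prop
  | s, some (SplitLabel.plus a), s' => ∃ t, N.l t = some a ∧ N.enabled s.1 t ∧
      (∀ p, s'.1 p = s.1 p - N.pre t p) ∧ s'.2 = s.2 + {t}
  | s, some (SplitLabel.minus a), s' => ∃ t, N.l t = some a ∧ s.2 = s'.2 + {t} ∧
      ∀ p, s'.1 p = s.1 p + N.post t p
  | s, none, s' => ∃ t, N.l t = none ∧ N.fire s.1 t s'.1 ∧ s'.2 = s.2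

/-- The split LTS associated to a net. -/
def splitLTS (N : PNet P Tr A) : LTS ((P → ℕ) × Multiset Tr) (SplitLabel A) :=
  ⟨(N.M0, 0), N.splitTr⟩

end PNet

/-- `N1 ≈Δ_bSTb N2` : branching ST-bisimilarity with explicit divergence. -/
def BranchingSTBisimilarED {P1 T1 P2 T2 A : Type}
    (N1 : PNet P1 T1 A) (N2 : PNet P2 T2 A) : Prop :=
  BranchingBisimilarED N1.stLTS N2.stLTS

/-- `N1 ≈R N2` : step readiness equivalence. -/
def StepReadinessEquiv {P1 T1 P2 T2 A : Type}
    (N1 : PNet P1 T1 A) (N2 : PNet P2 T2 A) : Prop :=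
  ∀ σ X, N1.StepReadyPair σ X ↔ N2.StepReadyPair σ X

/-- A component with interface `(I, O)`. -/
structure NetComponent (P Tr A : Type) where
  net : PNet P Tr A
  I : Set P
  O : Set P
  I_sub : I ⊆ net.places
  O_sub : O ⊆ net.places
  disjIO : Disjoint I O
  O_noPost : ∀ p ∈ O, ∀ t, net.pre t p = 0

/-- A sequential component with interface: some set `Q` of private places carries
exactly one token initially, and every transition consumes and produces exactly one
token in `Q`. -/
def NetComponent.Sequential {P Tr A : Type} (C : NetComponent P Tr A) : Prop :=
  ∃ Q : Set P, Q ⊆ C.net.places \ (C.I ∪ C.O) ∧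
    (∀ t ∈ C.net.trans,
      (∃ q ∈ Q, C.net.pre t q = 1 ∧ ∀ q' ∈ Q, q' ≠ q → C.net.pre t q' = 0) ∧
        ∃ q ∈ Q, C.net.post t q = 1 ∧ ∀ q' ∈ Q, q' ≠ q → C.net.post t q' = 0) ∧
    ∃ q ∈ Q, C.net.M0 q = 1 ∧ ∀ q' ∈ Q, q' ≠ q → C.net.M0 q' = 0

/-- The components of the family `C` are pairwise composable: disjoint except for
shared interface places, and with pairwise disjoint sets of input places. -/
def Composable {K P Tr A : Type} (C : K → NetComponent P Tr A) : Prop :=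
  (∀ k l, k ≠ l → Disjoint (C k).net.trans (C l).net.trans) ∧
    (∀ k l, k ≠ l →
      (C k).net.places ∩ (C l).net.places =
        ((C k).I ∪ (C k).O) ∩ ((C l).I ∪ (C l).O)) ∧
    ∀ k l, k ≠ l → Disjoint (C k).I (C l).I

/-- `D = ‖_{k ∈ K} C k` : `D` is the asynchronous parallel composition of the
family `C` of components. -/
structure IsParComp {K P Tr A : Type} (C : K → NetComponent P Tr A)
    (D : NetComponent P Tr A) : Prop where
  places_eq : D.net.places = ⋃ k, (C k).net.places
  trans_eq : D.net.trans = ⋃ k, (C k).net.trans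
  pre_eq : ∀ k, ∀ t ∈ (C k).net.trans, ∀ p, D.net.pre t p = (C k).net.pre t p
  post_eq : ∀ k, ∀ t ∈ (C k).net.trans, ∀ p, D.net.post t p = (C k).net.post t p
  M0_eq : ∀ p, D.net.M0 p = finsum fun k => (C k).net.M0 p
  l_eq : ∀ k, ∀ t ∈ (C k).net.trans, D.net.l t = (C k).net.l t
  I_eq : D.I = ⋃ k, (C k).I
  O_eq : D.O = (⋃ k, (C k).O) \ ⋃ k, (C k).I

/-- An LSGA net: an asynchronous parallel composition of sequential components
with interface. -/
def IsLSGA {P Tr A : Type} (N : PNet P Tr A) : Prop :=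
  ∃ (K : Type) (C : K → NetComponent P Tr A) (D : NetComponent P Tr A),
    Composable C ∧ (∀ k, (C k).Sequential) ∧ IsParComp C D ∧ D.net = N
section Method2STHelpers

open Finsupp

variable {P Tr Tr' A : Type}

/-- The finite multiset (as a `Finsupp`) of elements of a list. -/
noncomputable def listF (L : List Tr) : Tr →₀ ℕ :=
  (L.map fun t => Finsupp.single t 1).sum

@[simp] lemma listF_nil : listF ([] : List Tr) = 0 := rfl

@[simp] lemma listF_cons (t : Tr) (L : List Tr) :
    listF (t :: L) = Finsupp.single t 1 + listF L := by
  simp [listF]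

lemma listF_concat (t : Tr) (L : List Tr) :
    listF (L ++ [t]) = listF L + Finsupp.single t 1 := by
  simp [listF]

lemma mem_of_listF_support {L : List Tr} {u : Tr} (h : u ∈ (listF L).support) : u ∈ L := by
  induction L with
  | nil => simp at h
  | cons a L ih =>
    rw [listF_cons] at h
    rcases Finset.mem_union.mp (Finsupp.support_add h) with h' | h'
    · have := Finsupp.support_single_subset h'
      simp at this; simp [this]
    · simp [ih h']

lemma listF_eraseIdx {L : List Tr} {n : ℕ} {t : Tr} (h : L[n]? = some t) :
    listF L = Finsupp.single t 1 + listF (L.eraseIdx n) := by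
  induction L generalizing n with
  | nil => simp at h
  | cons a L ih =>
    cases n with
    | zero => simp_all
    | succ n =>
      rw [List.getElem?_cons_succ] at h
      rw [List.eraseIdx_cons_succ, listF_cons, listF_cons, ih h]
      abel

namespace PNet

lemma preStep_add (N : PNet P Tr A) (G H : Tr →₀ ℕ) (p : P) :
    N.preStep (G + H) p = N.preStep G p + N.preStep H p :=
  Finsupp.sum_add_index' (fun _ => zero_mul _) (fun _ _ _ => add_mul _ _ _)

lemma preStep_single (N : PNet P Tr A) (t : Tr) (n : ℕ) (p : P) :
    N.preStep (Finsupp.single t n) p = n * N.pre t p :=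
  Finsupp.sum_single_index (zero_mul _)

@[simp] lemma preStep_zero (N : PNet P Tr A) (p : P) : N.preStep 0 p = 0 :=
  Finsupp.sum_zero_index

lemma postStep_add (N : PNet P Tr A) (G H : Tr →₀ ℕ) (p : P) :
    N.postStep (G + H) p = N.postStep G p + N.postStep H p :=
  Finsupp.sum_add_index' (fun _ => zero_mul _) (fun _ _ _ => add_mul _ _ _)

lemma postStep_single (N : PNet P Tr A) (t : Tr) (n : ℕ) (p : P) :
    N.postStep (Finsupp.single t n) p = n * N.post t p :=
  Finsupp.sum_single_index (zero_mul _)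

lemma labCount_eq_sum (N : PNet P Tr A) (G : Tr →₀ ℕ) (a : A) :
    N.labCount G a = G.sum fun t n => if N.l t = some a then n else 0 := rfl

lemma labCount_add (N : PNet P Tr A) (G H : Tr →₀ ℕ) (a : A) :
    N.labCount (G + H) a = N.labCount G a + N.labCount H a := by
  rw [labCount_eq_sum, labCount_eq_sum, labCount_eq_sum]
  exact Finsupp.sum_add_index' (fun _ => by split <;> rfl)
    (fun _ _ _ => by split <;> simp)

lemma labCount_single (N : PNet P Tr A) (t : Tr) (n : ℕ) (a : A) :
    N.labCount (Finsupp.single t n) a = if N.l t = some a then n else 0 := by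
  rw [labCount_eq_sum]
  exact Finsupp.sum_single_index (by split <;> rfl)

lemma labCountZ_eq_sum (N : PNet P Tr A) (G : Tr →₀ ℤ) (a : A) :
    N.labCountZ G a = G.sum fun t n => if N.l t = some a then n else 0 := rfl

lemma labCountZ_add (N : PNet P Tr A) (G H : Tr →₀ ℤ) (a : A) :
    N.labCountZ (G + H) a = N.labCountZ G a + N.labCountZ H a := by
  rw [labCountZ_eq_sum, labCountZ_eq_sum, labCountZ_eq_sum]
  exact Finsupp.sum_add_index' (fun _ => by split <;> rfl)
    (fun _ _ _ => by split <;> simp)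

lemma labCountZ_neg (N : PNet P Tr A) (G : Tr →₀ ℤ) (a : A) :
    N.labCountZ (-G) a = - N.labCountZ G a := by
  unfold labCountZ
  rw [Finsupp.support_neg, ← Finset.sum_neg_distrib]
  refine Finset.sum_congr rfl fun t _ => ?_
  by_cases h : N.l t = some a <;> simp [h]

lemma labCountZ_single (N : PNet P Tr A) (t : Tr) (n : ℤ) (a : A) :
    N.labCountZ (Finsupp.single t n) a = if N.l t = some a then n else 0 := by
  rw [labCountZ_eq_sum]
  exact Finsupp.sum_single_index (by split <;> rfl)

lemma tok_eq_sum (N : PNet P Tr A) (G : Tr →₀ ℤ) (p : P) :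
    N.tok G p = G.sum fun t n => n * ((N.post t p : ℤ) - (N.pre t p : ℤ)) := rfl

lemma tok_add (N : PNet P Tr A) (G H : Tr →₀ ℤ) (p : P) :
    N.tok (G + H) p = N.tok G p + N.tok H p := by
  rw [tok_eq_sum, tok_eq_sum, tok_eq_sum]
  exact Finsupp.sum_add_index' (fun _ => zero_mul _) (fun _ _ _ => add_mul _ _ _)

lemma tok_neg (N : PNet P Tr A) (G : Tr →₀ ℤ) (p : P) :
    N.tok (-G) p = - N.tok G p := by
  unfold tok
  rw [Finsupp.support_neg, ← Finset.sum_neg_distrib]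
  refine Finset.sum_congr rfl fun t _ => by simp [neg_mul]

lemma tok_sub (N : PNet P Tr A) (G H : Tr →₀ ℤ) (p : P) :
    N.tok (G - H) p = N.tok G p - N.tok H p := by
  rw [sub_eq_add_neg, tok_add, tok_neg, sub_eq_add_neg]

lemma tok_single (N : PNet P Tr A) (t : Tr) (n : ℤ) (p : P) :
    N.tok (Finsupp.single t n) p = n * ((N.post t p : ℤ) - (N.pre t p : ℤ)) := by
  rw [tok_eq_sum]
  exact Finsupp.sum_single_index (zero_mul _)

@[simp] lemma tok_zero (N : PNet P Tr A) (p : P) : N.tok 0 p = 0 := by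
  rw [tok_eq_sum]; exact Finsupp.sum_zero_index

@[simp] lemma labCountZ_zero (N : PNet P Tr A) (a : A) : N.labCountZ 0 a = 0 := by
  rw [labCountZ_eq_sum]; exact Finsupp.sum_zero_index

/-- The ℤ-valued version of a ℕ-multiset of transitions. -/
noncomputable def zcast (G : Tr →₀ ℕ) : Tr →₀ ℤ :=
  G.mapRange (Nat.cast) Nat.cast_zero

@[simp] lemma zcast_support (G : Tr →₀ ℕ) : (zcast G).support = G.support :=
  Finsupp.support_mapRange_of_injective Nat.cast_zero G Nat.cast_injective

lemma tok_zcast (N : PNet P Tr A) (G : Tr →₀ ℕ) (p : P) :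
    N.tok (zcast G) p = N.tokN G p := by
  unfold tok tokN
  rw [zcast_support]
  refine Finset.sum_congr rfl fun t _ => by rw [zcast, Finsupp.mapRange_apply]

lemma silent_zcast (N : PNet P Tr A) {G : Tr →₀ ℕ} (h : ∀ u ∈ G.support, N.l u = none) :
    N.SilentZ (zcast G) := by
  intro a
  unfold labCountZ
  refine Finset.sum_eq_zero fun t ht => ?_
  rw [zcast_support] at ht
  simp [h t ht]

end PNet

end Method2STHelpers
section Method2STHelpers2

variable {P Tr Tr' A : Type}

lemma forall2_eraseIdx {α β : Type*} {R : α → β → Prop} {L : List α} {L' : List β}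
    (h : List.Forall₂ R L L') : ∀ n, List.Forall₂ R (L.eraseIdx n) (L'.eraseIdx n) := by
  induction h with
  | nil => intro n; simp
  | cons ha hl ih =>
    intro n
    cases n with
    | zero => simpa using hl
    | succ n =>
      rw [List.eraseIdx_cons_succ, List.eraseIdx_cons_succ]
      exact List.Forall₂.cons ha (ih n)

lemma forall2_get {α β : Type*} {R : α → β → Prop} {L : List α} {L' : List β}
    (h : List.Forall₂ R L L') : ∀ {n : ℕ} {a : α} {b : β}, L[n]? = some a → L'[n]? = some b → R a b := by
  induction h with
  | nil => intro n a b h1; simp at h1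
  | cons ha hl ih =>
    intro n a b h1 h2
    cases n with
    | zero => simp_all
    | succ n => rw [List.getElem?_cons_succ] at h1 h2; exact ih h1 h2

lemma forall2_exists_right {α β : Type*} {R : α → β → Prop} {L : List α} {L' : List β}
    (h : List.Forall₂ R L L') : ∀ {n : ℕ} {a : α}, L[n]? = some a → ∃ b, L'[n]? = some b := by
  induction h with
  | nil => intro n a h1; simp at h1
  | @cons x y L L' ha hl ih =>
    intro n a h1
    cases n with
    | zero => exact ⟨y, by simp⟩
    | succ n => rw [List.getElem?_cons_succ] at h1 ⊢; exact ih h1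

lemma forall2_exists_left {α β : Type*} {R : α → β → Prop} {L : List α} {L' : List β}
    (h : List.Forall₂ R L L') : ∀ {n : ℕ} {b : β}, L'[n]? = some b → ∃ a, L[n]? = some a := by
  induction h with
  | nil => intro n b h1; simp at h1
  | @cons x y L L' ha hl ih =>
    intro n b h1
    cases n with
    | zero => exact ⟨x, by simp⟩
    | succ n => rw [List.getElem?_cons_succ] at h1 ⊢; exact ih h1

lemma forall2_mem_left {α β : Type*} {R : α → β → Prop} {L : List α} {L' : List β}
    (h : List.Forall₂ R L L') : ∀ {a}, a ∈ L → ∃ b ∈ L', R a b := by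
  induction h with
  | nil => intro a h1; simp at h1
  | cons ha hl ih =>
    intro a h1
    rcases List.mem_cons.mp h1 with rfl | h1
    · exact ⟨_, List.mem_cons_self, ha⟩
    · obtain ⟨b, hb, hr⟩ := ih h1
      exact ⟨b, List.mem_cons_of_mem _ hb, hr⟩

lemma forall2_mem_right {α β : Type*} {R : α → β → Prop} {L : List α} {L' : List β}
    (h : List.Forall₂ R L L') : ∀ {b}, b ∈ L' → ∃ a ∈ L, R a b := by
  induction h with
  | nil => intro b h1; simp at h1
  | cons ha hl ih =>
    intro b h1
    rcases List.mem_cons.mp h1 with rfl | h1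
    · exact ⟨_, List.mem_cons_self, ha⟩
    · obtain ⟨a, hb, hr⟩ := ih h1
      exact ⟨a, List.mem_cons_of_mem _ hb, hr⟩

lemma acc_of_no_inf {α : Type*} {r : α → α → Prop} {M : α}
    (h : ∀ f : ℕ → α, f 0 = M → ¬ ∀ n, r (f n) (f (n + 1))) :
    Acc (fun x y => r y x) M := by
  by_contra hM
  have step : ∀ x, ¬ Acc (fun x y => r y x) x →
      ∃ y, r x y ∧ ¬ Acc (fun x y => r y x) y := by
    intro x hx
    by_contra hc
    push_neg at hc
    exact hx (Acc.intro x fun y hy => hc y hy)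
  let f : ℕ → {x : α // ¬ Acc (fun x y => r y x) x} := fun n =>
    Nat.rec ⟨M, hM⟩ (fun _ p => ⟨(step p.1 p.2).choose, (step p.1 p.2).choose_spec.2⟩) n
  exact h (fun n => (f n).1) rfl fun n => (step (f n).1 (f n).2).choose_spec.1

namespace PNet

lemma reach_congr (N : PNet P Tr A) {M M2 : P → ℕ} (h : N.Reachable M)
    (he : ∀ p, M p = M2 p) : N.Reachable M2 := by
  have : M = M2 := funext he
  exact this ▸ h

lemma reach_fire (N : PNet P Tr A) {M : P → ℕ} {t : Tr} (h : N.Reachable M)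
    (ht : t ∈ N.trans) (hpre : ∀ p, N.pre t p ≤ M p) :
    N.Reachable (fun p => M p - N.pre t p + N.post t p) := by
  refine h.step (G := Finsupp.single t 1) ⟨?_, ?_, ?_, ?_⟩
  · simp [Finsupp.single_eq_zero]
  · intro u hu
    have := Finsupp.support_single_subset hu
    simp only [Finset.mem_singleton] at this
    subst this; exact ht
  · intro p; rw [preStep_single]; simpa using hpre p
  · intro p; rw [preStep_single, postStep_single]; simp

lemma labCount_listF_eq (N : PNet P Tr A) (N' : PNet P Tr' A) {U : List Tr} {U' : List Tr'}
    (h : List.Forall₂ (fun t t' => N'.l t' = N.l t) U U') (a : A) :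
    N'.labCount (listF U') a = N.labCount (listF U) a := by
  induction h with
  | nil => simp [labCount_eq_sum]
  | cons hr hl ih =>
    rw [listF_cons, listF_cons, labCount_add, labCount_add, labCount_single,
      labCount_single, ih, hr]

/-- The invariant (candidate branching bisimulation) used for Lemma 2ST. -/
def Inv2ST (N : PNet P Tr A) (N' : PNet P Tr' A)
    (s1 : (P → ℕ) × List Tr) (s2 : (P → ℕ) × List Tr') : Prop :=
  ∃ G : Tr →₀ ℤ,
    ↑G.support ⊆ N.trans ∧ N.SilentZ G ∧
    (∀ p, s2.1 p ≠ 0 → p ∈ N'.places) ∧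
    List.Forall₂ (fun t t' => t ∈ N.trans ∧ t' ∈ N'.trans ∧ N'.l t' = N.l t ∧
      N.l t ≠ none) s1.2 s2.2 ∧
    N'.Reachable (fun p => s2.1 p + N'.preStep (listF s2.2) p) ∧
    (∀ p, (s1.1 p : ℤ) = (s2.1 p : ℤ) + (N'.preStep (listF s2.2) p : ℤ)
        + ((N.M0 p : ℤ) - (N'.M0 p : ℤ)) + N.tok G p - (N.preStep (listF s1.2) p : ℤ)) ∧
    N.Reachable (fun p => s1.1 p + N.preStep (listF s1.2) p)

lemma inv_tau (N : PNet P Tr A) (N' : PNet P Tr' A) {M M1 : P → ℕ} {U : List Tr}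
    {s2 : (P → ℕ) × List Tr'} (hinv : N.Inv2ST N' (M, U) s2) (htau : N.tauFire M M1) :
    N.Inv2ST N' (M1, U) s2 := by
  obtain ⟨G, hGs, hGsil, hM's, hF2, hre', heq, hre⟩ := hinv
  obtain ⟨t, hlt, ⟨⟨htt, hpre⟩, hM1⟩⟩ := htau
  dsimp only at hM's hF2 hre' heq hre ⊢
  refine ⟨G + Finsupp.single t 1, ?_, ?_, hM's, hF2, hre', ?_, ?_⟩
  · intro u hu
    rcases Finset.mem_union.mp (Finsupp.support_add hu) with h' | h'
    · exact hGs h'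
    · have := Finsupp.support_single_subset h'
      simp only [Finset.mem_singleton] at this
      subst this; exact htt
  · intro a
    rw [labCountZ_add, labCountZ_single, hGsil a]
    simp [hlt]
  · intro p
    dsimp only
    have h0 := heq p
    have h1 := hM1 p
    have h2 := hpre p
    rw [tok_add, tok_single, one_mul]
    omega
  · refine N.reach_congr (N.reach_fire hre htt fun p => le_trans (hpre p) (Nat.le_add_right _ _)) ?_
    intro p
    dsimp only
    have := hpre p
    have := hM1 p
    omega

lemma inv_plus (N : PNet P Tr A) (N' : PNet P Tr' A) {M M' : P → ℕ} {U : List Tr}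
    {U' : List Tr'} {t : Tr} {t' : Tr'} {a : A}
    (hinv : N.Inv2ST N' (M, U) (M', U')) (hlt : N.l t = some a) (hent : N.enabled M t)
    (hlt' : N'.l t' = some a) (hent' : N'.enabled M' t') :
    N.Inv2ST N' (fun p => M p - N.pre t p, U ++ [t])
      (fun p => M' p - N'.pre t' p, U' ++ [t']) := by
  obtain ⟨G, hGs, hGsil, hM's, hF2, hre', heq, hre⟩ := hinv
  obtain ⟨htt, hpre⟩ := hent
  obtain ⟨htt', hpre'⟩ := hent'
  dsimp only at hM's hF2 hre' heq hre ⊢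
  refine ⟨G, hGs, hGsil, ?_, ?_, ?_, ?_, ?_⟩
  · intro p hp
    dsimp only at hp
    exact hM's p fun h0 => hp (by simp [h0])
  · refine List.rel_append hF2 (List.Forall₂.cons ⟨htt, htt', hlt'.trans hlt.symm, by simp [hlt]⟩ List.Forall₂.nil)
  · refine N'.reach_congr hre' fun p => ?_
    dsimp only
    rw [listF_concat]
    simp only [PNet.preStep_add, PNet.preStep_single, one_mul]
    have := hpre' p
    omega
  · intro p
    dsimp only
    have h0 := heq p
    have h1 := hpre p
    have h2 := hpre' p
    rw [listF_concat, listF_concat]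
    simp only [PNet.preStep_add, PNet.preStep_single, one_mul]
    omega
  · refine N.reach_congr hre fun p => ?_
    dsimp only
    rw [listF_concat]
    simp only [PNet.preStep_add, PNet.preStep_single, one_mul]
    have := hpre p
    omega

end PNet

end Method2STHelpers2
section Method2STHelpers3

variable {P Tr Tr' A : Type}

namespace PNet

lemma inv_minus (N : PNet P Tr A) (N' : PNet P Tr' A) (hplain : N'.Plain)
    (h1 : ∀ t ∈ N.trans, N.l t ≠ none →
      ∃ t' ∈ N'.trans, N'.l t' = N.l t ∧
        ∃ G : Tr →₀ ℕ, ↑G.support ⊆ N.trans ∧ (∀ u ∈ G.support, N.l u = none) ∧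
          ∀ p, (N'.post t' p : ℤ) - (N'.pre t' p : ℤ)
              = ((N.post t p : ℤ) - (N.pre t p : ℤ)) + N.tokN G p)
    {M : P → ℕ} {M' : P → ℕ} {U : List Tr} {U' : List Tr'} {n : ℕ} {t : Tr} {t' : Tr'}
    (hinv : N.Inv2ST N' (M, U) (M', U'))
    (hUn : U[n]? = some t) (hU'n : U'[n]? = some t') :
    N.Inv2ST N' (fun p => M p + N.post t p, U.eraseIdx n)
      (fun p => M' p + N'.post t' p, U'.eraseIdx n) := by
  obtain ⟨G, hGs, hGsil, hM's, hF2, hre', heq, hre⟩ := hinv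
  dsimp only at hM's hF2 hre' heq hre
  obtain ⟨htt, htt', hll, hlnn⟩ := forall2_get hF2 hUn hU'n
  obtain ⟨t'', htt'', hl'', Gt, hGts, hGtl, hGteq⟩ := h1 t htt hlnn
  have ht'eq : t' = t'' := hplain.2 t' htt' t'' htt'' (by rw [hll, hl''])
  subst ht'eq
  have hErU : listF U = Finsupp.single t 1 + listF (U.eraseIdx n) := listF_eraseIdx hUn
  have hErU' : listF U' = Finsupp.single t' 1 + listF (U'.eraseIdx n) := listF_eraseIdx hU'n
  refine ⟨G - zcast Gt, ?_, ?_, ?_, forall2_eraseIdx hF2 n, ?_, ?_, ?_⟩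
  · intro u hu
    rw [Finset.mem_coe, sub_eq_add_neg] at hu
    rcases Finset.mem_union.mp (Finsupp.support_add hu) with h' | h'
    · exact hGs h'
    · rw [Finsupp.support_neg, zcast_support] at h'
      exact hGts h'
  · intro a
    rw [sub_eq_add_neg, labCountZ_add, labCountZ_neg, hGsil a, N.silent_zcast hGtl a]
    simp
  · intro p hp
    dsimp only at hp
    by_cases h0 : M' p = 0
    · have hpost : N'.post t' p ≠ 0 := by omega
      exact (N'.post_wf t' p hpost).2
    · exact hM's p h0
  · have hpre'le : ∀ p, N'.pre t' p ≤ M' p + N'.preStep (listF U') p := by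
      intro p
      rw [hErU']
      simp only [PNet.preStep_add, PNet.preStep_single, one_mul]
      omega
    refine N'.reach_congr (N'.reach_fire hre' htt' hpre'le) fun p => ?_
    dsimp only
    rw [hErU']
    simp only [PNet.preStep_add, PNet.preStep_single, one_mul]
    omega
  · intro p
    dsimp only
    have h0 := heq p
    rw [hErU, hErU'] at h0
    simp only [PNet.preStep_add, PNet.preStep_single, one_mul] at h0
    have h1p := hGteq p
    rw [tok_sub, tok_zcast]
    omega
  · have hprele : ∀ p, N.pre t p ≤ M p + N.preStep (listF U) p := by
      intro p
      rw [hErU]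
      simp only [PNet.preStep_add, PNet.preStep_single, one_mul]
      omega
    refine N.reach_congr (N.reach_fire hre htt hprele) fun p => ?_
    dsimp only
    rw [hErU]
    simp only [PNet.preStep_add, PNet.preStep_single, one_mul]
    omega

end PNet

end Method2STHelpers3
/-- the second method (Lemma 2ST) for establishing
`N ≈Δ_bSTb N'`, with `N'` plain, `S' ⊆ S` and `M0' = M0 ↾ S'`. -/
theorem method_2ST {P Tr Tr' A : Type} (N : PNet P Tr A) (N' : PNet P Tr' A)
    (hplain : N'.Plain) (hplaces : N'.places ⊆ N.places)
    (hM0 : ∀ p ∈ N'.places, N'.M0 p = N.M0 p)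
    (h1 : ∀ t ∈ N.trans, N.l t ≠ none →
      ∃ t' ∈ N'.trans, N'.l t' = N.l t ∧
        ∃ G : Tr →₀ ℕ, ↑G.support ⊆ N.trans ∧ (∀ u ∈ G.support, N.l u = none) ∧
          ∀ p, (N'.post t' p : ℤ) - (N'.pre t' p : ℤ)
              = ((N.post t p : ℤ) - (N.pre t p : ℤ)) + N.tokN G p)
    (h2 : ∀ G : Tr →₀ ℤ, ↑G.support ⊆ N.trans → N.SilentZ G →
      ∀ (M' : P → ℕ) (U' : Tr' →₀ ℕ) (U : Tr →₀ ℕ) (M : P → ℕ),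
        (∀ p, M' p ≠ 0 → p ∈ N'.places) →
        ↑U'.support ⊆ N'.trans → ↑U.support ⊆ N.trans →
        (∀ a, N'.labCount U' a = N.labCount U a) →
        N'.Reachable (fun p => M' p + N'.preStep U' p) →
        (∀ p, (M p : ℤ) = (M' p : ℤ) + (N'.preStep U' p : ℤ)
            + ((N.M0 p : ℤ) - (N'.M0 p : ℤ)) + N.tok G p - (N.preStep U p : ℤ)) →
        N.Reachable (fun p => M p + N.preStep U p) →
        ((∀ f : ℕ → (P → ℕ), f 0 = M → ¬ ∀ n, N.tauFire (f n) (f (n + 1))) ∧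
         (∀ a : A, (∃ M'', N'.visFire a M' M'') →
            (∃ M'', N.visFire a M M'') ∨ ∃ M'', N.tauFire M M'') ∧
         ∀ a : A, (∃ M'', N.visFire a M M'') → ∃ M'', N'.visFire a M' M'')) :
    BranchingSTBisimilarED N N' := by
  have key : ∀ s1 : (P → ℕ) × List Tr, ∀ s2 : (P → ℕ) × List Tr', N.Inv2ST N' s1 s2 →
      ((∀ f : ℕ → (P → ℕ), f 0 = s1.1 → ¬ ∀ n, N.tauFire (f n) (f (n + 1))) ∧
       (∀ a : A, (∃ M'', N'.visFire a s2.1 M'') →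
          (∃ M'', N.visFire a s1.1 M'') ∨ ∃ M'', N.tauFire s1.1 M'') ∧
       (∀ a : A, (∃ M'', N.visFire a s1.1 M'') → ∃ M'', N'.visFire a s2.1 M'')) := by
    rintro ⟨M, U⟩ ⟨M', U'⟩ ⟨G, hGs, hGsil, hM's, hF2, hre', heq, hre⟩
    dsimp only at hM's hF2 hre' heq hre ⊢
    refine h2 G hGs hGsil M' (listF U') (listF U) M hM's ?_ ?_ ?_ hre' heq hre
    · intro u hu
      obtain ⟨x, hx, hr⟩ := forall2_mem_right hF2 (mem_of_listF_support (Finset.mem_coe.mp hu))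
      exact hr.2.1
    · intro u hu
      obtain ⟨x, hx, hr⟩ := forall2_mem_left hF2 (mem_of_listF_support (Finset.mem_coe.mp hu))
      exact hr.1
    · exact fun a => N.labCount_listF_eq N' (List.Forall₂.imp (fun a b hr => hr.2.2.1) hF2) a
  refine ⟨N.Inv2ST N', ⟨?_, ?_, ?_⟩, ?_⟩
  · -- initial states related
    show N.Inv2ST N' (N.M0, []) (N'.M0, [])
    refine ⟨0, by simp, fun a => by simp, fun p h => N'.M0_wf p h, List.Forall₂.nil, ?_, ?_, ?_⟩
    · exact N'.reach_congr PNet.Reachable.refl fun p => by simp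
    · intro p; dsimp only; simp
    · exact N.reach_congr PNet.Reachable.refl fun p => by simp
  · -- forward simulation
    rintro ⟨M, U⟩ ⟨M', U'⟩ η s1' hB htr
    cases η with
    | none =>
      obtain ⟨t, hlt, hfire, hsnd⟩ := htr
      have hs1' : s1' = (s1'.1, U) := by
        cases s1'; simpa using hsnd
      refine ⟨(M', U'), (M', U'), Relation.ReflTransGen.refl, Or.inr ⟨rfl, rfl⟩, hB, ?_⟩
      rw [hs1']
      exact N.inv_tau N' hB ⟨t, hlt, hfire⟩
    | some l =>
      cases l with
      | plus a =>
        obtain ⟨t, hlt, hent, hfst, hsnd⟩ := htr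
        obtain ⟨M'', t', hlt', hfire'⟩ := (key _ _ hB).2.2 a ⟨_, t, hlt, hent, fun p => rfl⟩
        have hs1' : s1' = (fun p => M p - N.pre t p, U ++ [t]) := by
          cases s1'; simp only [Prod.mk.injEq]; exact ⟨funext hfst, hsnd⟩
        refine ⟨(M', U'), (fun p => M' p - N'.pre t' p, U' ++ [t']),
          Relation.ReflTransGen.refl, Or.inl ⟨t', hlt', hfire'.1, fun p => rfl, rfl⟩, hB, ?_⟩
        rw [hs1']
        exact N.inv_plus N' hB hlt hent hlt' hfire'.1
      | minus a n =>
        obtain ⟨t, hUn, hlt, hsnd, hfst⟩ := htr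
        have hBc := hB
        obtain ⟨G, -, -, -, hF2, -, -, -⟩ := hBc
        dsimp only at hF2
        obtain ⟨t', hU'n⟩ := forall2_exists_right hF2 hUn
        have hR := forall2_get hF2 hUn hU'n
        have hlt' : N'.l t' = some a := by rw [hR.2.2.1, hlt]
        have hs1' : s1' = (fun p => M p + N.post t p, U.eraseIdx n) := by
          cases s1'; simp only [Prod.mk.injEq]; exact ⟨funext hfst, hsnd⟩
        refine ⟨(M', U'), (fun p => M' p + N'.post t' p, U'.eraseIdx n),
          Relation.ReflTransGen.refl, Or.inl ⟨t', hU'n, hlt', rfl, fun p => rfl⟩, hB, ?_⟩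
        rw [hs1']
        exact N.inv_minus N' hplain h1 hB hUn hU'n
  · -- backward simulation
    rintro ⟨M, U⟩ ⟨M', U'⟩ η s2' hB htr
    cases η with
    | none =>
      obtain ⟨t, hlt, hfire, -⟩ := htr
      exact absurd hlt (hplain.1 t hfire.1.1)
    | some l =>
      cases l with
      | minus a n =>
        obtain ⟨t', hU'n, hlt', hsnd, hfst⟩ := htr
        have hBc := hB
        obtain ⟨G, -, -, -, hF2, -, -, -⟩ := hBc
        dsimp only at hF2
        obtain ⟨t, hUn⟩ := forall2_exists_left hF2 hU'n
        have hR := forall2_get hF2 hUn hU'n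
        have hlt : N.l t = some a := by rw [← hR.2.2.1]; exact hlt'
        have hs2' : s2' = (fun p => M' p + N'.post t' p, U'.eraseIdx n) := by
          cases s2'; simp only [Prod.mk.injEq]; exact ⟨funext hfst, hsnd⟩
        refine ⟨(M, U), (fun p => M p + N.post t p, U.eraseIdx n),
          Relation.ReflTransGen.refl, Or.inl ⟨t, hUn, hlt, rfl, fun p => rfl⟩, hB, ?_⟩
        rw [hs2']
        exact N.inv_minus N' hplain h1 hB hUn hU'n
      | plus a =>
        obtain ⟨t', hlt', hent', hfst, hsnd⟩ := htr
        have hacc := acc_of_no_inf (key _ _ hB).1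
        have main : ∀ Mx : P → ℕ, Acc (fun x y => N.tauFire y x) Mx →
            N.Inv2ST N' (Mx, U) (M', U') →
            ∃ Md, N.stLTS.Taus (Mx, U) (Md, U) ∧ N.Inv2ST N' (Md, U) (M', U') ∧
              ∃ t, N.l t = some a ∧ N.enabled Md t := by
          intro Mx haccx
          induction haccx with
          | intro x hx ih =>
            intro hinv
            rcases (key _ _ hinv).2.1 a ⟨_, t', hlt', hent', fun p => rfl⟩ with
              ⟨M'', tt, hltt, hfiret⟩ | ⟨M1, htau⟩
            · exact ⟨x, Relation.ReflTransGen.refl, hinv, tt, hltt, hfiret.1⟩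
            · obtain ⟨Md, htaus, hinvd, hrest⟩ := ih M1 htau (N.inv_tau N' hinv htau)
              obtain ⟨t0, hl0, hf0⟩ := htau
              refine ⟨Md, Relation.ReflTransGen.head (b := (M1, U)) ?_ ?_, hinvd, hrest⟩
              · exact ⟨t0, hl0, hf0, rfl⟩
              · exact htaus
        obtain ⟨Md, htaus, hinvd, t, hlt, hent⟩ := main M hacc hB
        have hs2' : s2' = (fun p => M' p - N'.pre t' p, U' ++ [t']) := by
          cases s2'; simp only [Prod.mk.injEq]; exact ⟨funext hfst, hsnd⟩
        refine ⟨(Md, U), (fun p => Md p - N.pre t p, U ++ [t]), htaus,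
          Or.inl ⟨t, hlt, hent, fun p => rfl, rfl⟩, hinvd, ?_⟩
        rw [hs2']
        exact N.inv_plus N' hinvd hlt hent hlt' hent'
  · -- explicit divergence
    rintro s1 s2 hB
    constructor
    · rintro ⟨f, hf0, hstep⟩
      exact absurd (fun n => by obtain ⟨t, hlt, hfire, -⟩ := hstep n; exact ⟨t, hlt, hfire⟩)
        ((key _ _ hB).1 (fun n => (f n).1) (congrArg Prod.fst hf0))
    · rintro ⟨f, hf0, hstep⟩
      obtain ⟨t, hlt, hfire, -⟩ := hstep 0
      exact absurd hlt (hplain.1 t hfire.1.1)
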